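/- arXiv:0806.3898 — 2 statements merged into one kernel-verified Lean document; each statement's English description precedes it below -/
import Mathlib

section
/- Let B = ⊕_{g∈G} B_g be a G-graded ring satisfying B_g · B_{g⁻¹} · B_g = B_g for all g ∈ G. Then for all g,h ∈ G: (i) B_{g⁻¹}·B_g·B_h = B_{g⁻¹}·B_{gh} and B_g·B_h·B_{h⁻¹} = B_{gh}·B_{h⁻¹}; (ii) setting D_g = B_g·B_{g⁻¹}, one has D_g·D_h = D_h·D_g; (iii) D_g·B_g = B_g and B_g·D_{g⁻¹} = B_g. -/
/-- The additive subgroup generated by products of elements of `S` and `T`. -/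
def setMul {B : Type} [NonUnitalRing B] (S T : AddSubgroup B) : AddSubgroup B :=
  AddSubgroup.closure (Set.image2 (· * ·) (S : Set B) (T : Set B))

section Aux

variable {B : Type} [NonUnitalRing B]

lemma mul_mem_setMul {S T : AddSubgroup B} {s t : B} (hs : s ∈ S) (ht : t ∈ T) :
    s * t ∈ setMul S T :=
  AddSubgroup.subset_closure ⟨s, hs, t, ht, rfl⟩

lemma setMul_le {S T U : AddSubgroup B} (h : ∀ s ∈ S, ∀ t ∈ T, s * t ∈ U) :
    setMul S T ≤ U := by
  apply (AddSubgroup.closure_le _).2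
  rintro x ⟨s, hs, t, ht, rfl⟩
  exact h s hs t ht

lemma setMul_mono {S S' T T' : AddSubgroup B} (hS : S ≤ S') (hT : T ≤ T') :
    setMul S T ≤ setMul S' T' :=
  setMul_le fun s hs t ht => mul_mem_setMul (hS hs) (hT ht)

lemma setMul_assoc (S T U : AddSubgroup B) :
    setMul (setMul S T) U = setMul S (setMul T U) := by
  apply le_antisymm
  · apply setMul_le
    intro x hx u hu
    induction hx using AddSubgroup.closure_induction with
    | mem y hy =>
      obtain ⟨s, hs, t, ht, rfl⟩ := hy
      rw [mul_assoc]
      exact mul_mem_setMul hs (mul_mem_setMul ht hu)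
    | zero => simpa using (setMul S (setMul T U)).zero_mem
    | add x y _ _ hx hy => simpa [add_mul] using (setMul S (setMul T U)).add_mem hx hy
    | neg x _ hx => simpa [neg_mul] using (setMul S (setMul T U)).neg_mem hx
  · apply setMul_le
    intro s hs y hy
    induction hy using AddSubgroup.closure_induction with
    | mem y hy =>
      obtain ⟨t, ht, u, hu, rfl⟩ := hy
      rw [← mul_assoc]
      exact mul_mem_setMul (mul_mem_setMul hs ht) hu
    | zero => simpa using (setMul (setMul S T) U).zero_mem
    | add x y _ _ hx hy => simpa [mul_add] using (setMul (setMul S T) U).add_mem hx hy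
    | neg x _ hx => simpa [mul_neg] using (setMul (setMul S T) U).neg_mem hx

end Aux

/-- STATEMENT 6, Lemma 5.3: if `B = ⊕_{g∈G} B_g` is a `G`-graded ring with
`B_g·B_{g⁻¹}·B_g = B_g` for all `g`, then for all `g, h ∈ G`:
(i) `B_{g⁻¹}·B_g·B_h = B_{g⁻¹}·B_{gh}` and `B_g·B_h·B_{h⁻¹} = B_{gh}·B_{h⁻¹}`;
(ii) `D_g·D_h = D_h·D_g` for `D_g = B_g·B_{g⁻¹}`;
(iii) `D_g·B_g = B_g` and `B_g·D_{g⁻¹} = B_g`. -/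
theorem graded_easy_lemma {G B : Type} [Group G] [DecidableEq G] [NonUnitalRing B]
    (Bc : G → AddSubgroup B)
    (hdir : DirectSum.IsInternal Bc)
    (hgrmul : ∀ (g h : G) (x y : B), x ∈ Bc g → y ∈ Bc h → x * y ∈ Bc (g * h))
    (hpr : ∀ g : G, setMul (setMul (Bc g) (Bc g⁻¹)) (Bc g) = Bc g)
    (g h : G) :
    setMul (setMul (Bc g⁻¹) (Bc g)) (Bc h) = setMul (Bc g⁻¹) (Bc (g * h)) ∧
    setMul (setMul (Bc g) (Bc h)) (Bc h⁻¹) = setMul (Bc (g * h)) (Bc h⁻¹) ∧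
    setMul (setMul (Bc g) (Bc g⁻¹)) (setMul (Bc h) (Bc h⁻¹)) =
      setMul (setMul (Bc h) (Bc h⁻¹)) (setMul (Bc g) (Bc g⁻¹)) ∧
    setMul (setMul (Bc g) (Bc g⁻¹)) (Bc g) = Bc g ∧
    setMul (Bc g) (setMul (Bc g⁻¹) (Bc g)) = Bc g := by
  have le1 : ∀ a b : G, setMul (Bc a) (Bc b) ≤ Bc (a * b) := fun a b =>
    setMul_le fun s hs t ht => hgrmul a b s t hs ht
  -- R1 : B_{a⁻¹}·B_a·B_b = B_{a⁻¹}·B_{ab}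
  have R1 : ∀ a b : G,
      setMul (setMul (Bc a⁻¹) (Bc a)) (Bc b) = setMul (Bc a⁻¹) (Bc (a * b)) := by
    intro a b
    apply le_antisymm
    · rw [setMul_assoc]
      exact setMul_mono le_rfl (le1 a b)
    · have h2 := hpr a⁻¹
      rw [inv_inv] at h2
      have h4 : setMul (Bc a⁻¹) (Bc (a * b)) ≤ Bc b := by
        have := le1 a⁻¹ (a * b); rwa [inv_mul_cancel_left] at this
      conv_lhs => rw [← h2]
      rw [setMul_assoc]
      exact setMul_mono le_rfl h4
  -- R2 : B_a·B_b·B_{b⁻¹} = B_{ab}·B_{b⁻¹}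
  have R2 : ∀ a b : G,
      setMul (setMul (Bc a) (Bc b)) (Bc b⁻¹) = setMul (Bc (a * b)) (Bc b⁻¹) := by
    intro a b
    apply le_antisymm
    · exact setMul_mono (le1 a b) le_rfl
    · have h2 := hpr b⁻¹
      rw [inv_inv] at h2
      have h4 : setMul (Bc (a * b)) (Bc b⁻¹) ≤ Bc a := by
        have := le1 (a * b) b⁻¹; rwa [mul_inv_cancel_right] at this
      conv_lhs => rw [← h2, ← setMul_assoc, ← setMul_assoc]
      exact setMul_mono (setMul_mono h4 le_rfl) le_rfl
  -- key : D_a·D_b = B_a·B_{a⁻¹b}·B_{b⁻¹}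
  have key : ∀ a b : G,
      setMul (setMul (Bc a) (Bc a⁻¹)) (setMul (Bc b) (Bc b⁻¹)) =
        setMul (setMul (Bc a) (Bc (a⁻¹ * b))) (Bc b⁻¹) := by
    intro a b
    rw [← setMul_assoc]
    have r := R1 a⁻¹ b
    rw [inv_inv] at r
    rw [r]
  have incl : ∀ a b : G,
      setMul (setMul (Bc a) (Bc (a⁻¹ * b))) (Bc b⁻¹) ≤
        setMul (setMul (Bc b) (Bc (b⁻¹ * a))) (Bc a⁻¹) := by
    intro a b
    have h3 := hpr (a⁻¹ * b)
    rw [mul_inv_rev, inv_inv] at h3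
    have hAC : setMul (Bc a) (Bc (a⁻¹ * b)) ≤ Bc b := by
      have := le1 a (a⁻¹ * b); rwa [mul_inv_cancel_left] at this
    have hCE : setMul (Bc (a⁻¹ * b)) (Bc b⁻¹) ≤ Bc a⁻¹ := by
      have := le1 (a⁻¹ * b) b⁻¹; rwa [mul_inv_cancel_right] at this
    have eq1 : setMul (setMul (Bc a) (Bc (a⁻¹ * b))) (Bc b⁻¹) =
        setMul (setMul (setMul (Bc a) (Bc (a⁻¹ * b))) (Bc (b⁻¹ * a)))
          (setMul (Bc (a⁻¹ * b)) (Bc b⁻¹)) := by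
      conv_lhs => rw [← h3]
      simp only [setMul_assoc]
    rw [eq1]
    exact setMul_mono (setMul_mono hAC le_rfl) hCE
  refine ⟨R1 g h, R2 g h, ?_, hpr g, ?_⟩
  · rw [key g h, key h g]
    exact le_antisymm (incl g h) (incl h g)
  · rw [← setMul_assoc, hpr g]
end

section
/- Let B = ⊕_{g∈G} B_g be a homogeneously non-degenerate G-graded algebra satisfying B_g·B_{g⁻¹}·B_g = B_g for all g, and suppose that for each g ∈ G the linking algebra C_g = [[B_gB_{g⁻¹}, B_g],[B_{g⁻¹}, B_{g⁻¹}B_g]] admits multipliers u_g, v_g with u_gv_g = e₁₁ and v_gu_g = e₂₂. Then the left multiplication map L_{u_g} : B_{g⁻¹} → D_g extends to an isomorphism of right B-modules L̃_{u_g} : B_{g⁻¹}B → B_gB sending xy ↦ (u_g x)y for x ∈ B_{g⁻¹}, y ∈ B, with inverse L̃_{v_g} : B_gB → B_{g⁻¹}B, xy ↦ (v_g x)y. -/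
variable {G : Type} [Group G] {B : Type} [NonUnitalRing B]

/-- Membership in the linking algebra
`C_g = [[B_g B_{g⁻¹}, B_g], [B_{g⁻¹}, B_{g⁻¹} B_g]]`, realized inside the
`2 × 2` matrices over `B`. -/
def CgMem (Bc : G → AddSubgroup B) (g : G) (x : Matrix (Fin 2) (Fin 2) B) : Prop :=
  x 0 0 ∈ setMul (Bc g) (Bc g⁻¹) ∧ x 0 1 ∈ Bc g ∧
  x 1 0 ∈ Bc g⁻¹ ∧ x 1 1 ∈ setMul (Bc g⁻¹) (Bc g)

/-- A multiplier `(L, Rm)` of the linking algebra `C_g`. -/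
structure LinkMult (Bc : G → AddSubgroup B) (g : G) where
  L : Matrix (Fin 2) (Fin 2) B → Matrix (Fin 2) (Fin 2) B
  Rm : Matrix (Fin 2) (Fin 2) B → Matrix (Fin 2) (Fin 2) B
  L_mem : ∀ x, CgMem Bc g x → CgMem Bc g (L x)
  R_mem : ∀ x, CgMem Bc g x → CgMem Bc g (Rm x)
  L_add : ∀ x y, CgMem Bc g x → CgMem Bc g y → L (x + y) = L x + L y
  R_add : ∀ x y, CgMem Bc g x → CgMem Bc g y → Rm (x + y) = Rm x + Rm y
  L_mul : ∀ x y, CgMem Bc g x → CgMem Bc g y → L (x * y) = L x * y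
  R_mul : ∀ x y, CgMem Bc g x → CgMem Bc g y → Rm (x * y) = x * Rm y
  compat : ∀ x y, CgMem Bc g x → CgMem Bc g y → Rm x * y = x * L y

/-- Left action of the corner multiplier `e₁₁` on `C_g`. -/
def me11L (x : Matrix (Fin 2) (Fin 2) B) : Matrix (Fin 2) (Fin 2) B :=
  !![x 0 0, x 0 1; 0, 0]

/-- Right action of the corner multiplier `e₁₁` on `C_g`. -/
def me11R (x : Matrix (Fin 2) (Fin 2) B) : Matrix (Fin 2) (Fin 2) B :=
  !![x 0 0, 0; x 1 0, 0]

/-- Left action of the corner multiplier `e₂₂` on `C_g`. -/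
def me22L (x : Matrix (Fin 2) (Fin 2) B) : Matrix (Fin 2) (Fin 2) B :=
  !![0, 0; x 1 0, x 1 1]

/-- Right action of the corner multiplier `e₂₂` on `C_g`. -/
def me22R (x : Matrix (Fin 2) (Fin 2) B) : Matrix (Fin 2) (Fin 2) B :=
  !![0, x 0 1; 0, x 1 1]

/-- `u_g v_g = e₁₁` and `v_g u_g = e₂₂` in the multiplier algebra of `C_g`
(recall `L_{uv} = L_u ∘ L_v` and `R_{uv} = R_v ∘ R_u`). -/
def CornerUVg (Bc : G → AddSubgroup B) (g : G) (u v : LinkMult Bc g) : Prop :=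
  (∀ x, CgMem Bc g x → u.L (v.L x) = me11L x) ∧
  (∀ x, CgMem Bc g x → v.Rm (u.Rm x) = me11R x) ∧
  (∀ x, CgMem Bc g x → v.L (u.L x) = me22L x) ∧
  (∀ x, CgMem Bc g x → u.Rm (v.Rm x) = me22R x)
-- ========== auxiliary machinery ==========
set_option linter.unusedSectionVars false
set_option maxHeartbeats 1000000

namespace ExtLM

variable {G : Type} [Group G] {B : Type} [NonUnitalRing B]

theorem mul_mem_setMul {S T : AddSubgroup B} {s t : B} (hs : s ∈ S) (ht : t ∈ T) :
    s * t ∈ setMul S T :=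
  AddSubgroup.subset_closure ⟨s, hs, t, ht, rfl⟩

theorem setMul_le {S T U : AddSubgroup B} (h : ∀ s ∈ S, ∀ t ∈ T, s * t ∈ U) :
    setMul S T ≤ U :=
  (AddSubgroup.closure_le U).2 (by rintro x ⟨s, hs, t, ht, rfl⟩; exact h s hs t ht)

theorem setMul_induction {S T : AddSubgroup B} {p : B → Prop}
    (mem : ∀ s ∈ S, ∀ t ∈ T, p (s * t)) (zero : p 0)
    (add : ∀ x y, p x → p y → p (x + y)) (neg : ∀ x, p x → p (-x)) :
    ∀ x ∈ setMul S T, p x := by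
  intro x hx
  refine AddSubgroup.closure_induction ?_ zero (fun a b _ _ ha hb => add a b ha hb)
    (fun a _ ha => neg a ha) hx
  rintro y ⟨s, hs, t, ht, rfl⟩
  exact mem s hs t ht

-- ====== basic CgMem lemmas ======

theorem CgMem_zero (Bc : G → AddSubgroup B) (g : G) : CgMem Bc g 0 :=
  ⟨zero_mem _, zero_mem _, zero_mem _, zero_mem _⟩

theorem CgMemAdd {Bc : G → AddSubgroup B} {g : G} {x y : Matrix (Fin 2) (Fin 2) B}
    (hx : CgMem Bc g x) (hy : CgMem Bc g y) : CgMem Bc g (x + y) :=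
  ⟨add_mem hx.1 hy.1, add_mem hx.2.1 hy.2.1, add_mem hx.2.2.1 hy.2.2.1,
    add_mem hx.2.2.2 hy.2.2.2⟩

theorem CgMemNeg {Bc : G → AddSubgroup B} {g : G} {x : Matrix (Fin 2) (Fin 2) B}
    (hx : CgMem Bc g x) : CgMem Bc g (-x) :=
  ⟨neg_mem hx.1, neg_mem hx.2.1, neg_mem hx.2.2.1, neg_mem hx.2.2.2⟩

theorem L_zero' {Bc : G → AddSubgroup B} {g : G} (u : LinkMult Bc g) : u.L 0 = 0 := by
  have h := u.L_add 0 0 (CgMem_zero Bc g) (CgMem_zero Bc g)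
  rw [add_zero] at h
  exact (left_eq_add.1 h)

theorem L_neg' {Bc : G → AddSubgroup B} {g : G} (u : LinkMult Bc g)
    {x : Matrix (Fin 2) (Fin 2) B} (hx : CgMem Bc g x) : u.L (-x) = -(u.L x) := by
  have h := u.L_add x (-x) hx (CgMemNeg hx)
  rw [add_neg_cancel, (L_zero' u)] at h
  exact eq_neg_of_add_eq_zero_right h.symm

-- ====== matrix embeddings ======

theorem CgMem_mE10 {Bc : G → AddSubgroup B} {g : G} {x : B} (hx : x ∈ Bc g⁻¹) :
    CgMem Bc g !![0, 0; x, 0] := by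
  refine ⟨?_, ?_, ?_, ?_⟩ <;> simp [zero_mem, hx]

theorem CgMem_mE01 {Bc : G → AddSubgroup B} {g : G} {x : B} (hx : x ∈ Bc g) :
    CgMem Bc g !![0, x; 0, 0] := by
  refine ⟨?_, ?_, ?_, ?_⟩ <;> simp [zero_mem, hx]

theorem CgMem_mE00 {Bc : G → AddSubgroup B} {g : G} {x : B}
    (hx : x ∈ setMul (Bc g) (Bc g⁻¹)) : CgMem Bc g !![x, 0; 0, 0] := by
  refine ⟨?_, ?_, ?_, ?_⟩ <;> simp [zero_mem, hx]

theorem CgMem_mE11 {Bc : G → AddSubgroup B} {g : G} {x : B}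
    (hx : x ∈ setMul (Bc g⁻¹) (Bc g)) : CgMem Bc g !![0, 0; 0, x] := by
  refine ⟨?_, ?_, ?_, ?_⟩ <;> simp [zero_mem, hx]

-- ====== swapping machinery ======

def mswap (M : Matrix (Fin 2) (Fin 2) B) : Matrix (Fin 2) (Fin 2) B :=
  !![M 1 1, M 1 0; M 0 1, M 0 0]

theorem mswap_mswap (M : Matrix (Fin 2) (Fin 2) B) : mswap (mswap M) = M := by
  ext i j; fin_cases i <;> fin_cases j <;> simp [mswap]

theorem mswap_add (M N : Matrix (Fin 2) (Fin 2) B) :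
    mswap (M + N) = mswap M + mswap N := by
  ext i j; fin_cases i <;> fin_cases j <;> simp [mswap]

theorem mswap_mul (M N : Matrix (Fin 2) (Fin 2) B) :
    mswap (M * N) = mswap M * mswap N := by
  ext i j; fin_cases i <;> fin_cases j <;>
    simp [mswap, Matrix.mul_apply, Fin.sum_univ_two, add_comm]

theorem CgMem_mswap {Bc : G → AddSubgroup B} {g : G} {M : Matrix (Fin 2) (Fin 2) B}
    (hM : CgMem Bc g M) : CgMem Bc g⁻¹ (mswap M) := by
  refine ⟨?_, ?_, ?_, ?_⟩ <;> simp only [mswap, inv_inv] <;> simp [hM.1, hM.2.1, hM.2.2.1, hM.2.2.2]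

theorem CgMem_mswap' {Bc : G → AddSubgroup B} {g : G} {M : Matrix (Fin 2) (Fin 2) B}
    (hM : CgMem Bc g⁻¹ M) : CgMem Bc g (mswap M) := by
  have := CgMem_mswap (g := g⁻¹) hM
  simpa only [inv_inv] using this

def swapLM {Bc : G → AddSubgroup B} {g : G} (u : LinkMult Bc g) :
    LinkMult Bc g⁻¹ where
  L x := mswap (u.L (mswap x))
  Rm x := mswap (u.Rm (mswap x))
  L_mem x hx := CgMem_mswap (u.L_mem _ (CgMem_mswap' hx))
  R_mem x hx := CgMem_mswap (u.R_mem _ (CgMem_mswap' hx))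
  L_add x y hx hy := by
    show mswap (u.L (mswap (x + y))) = mswap (u.L (mswap x)) + mswap (u.L (mswap y))
    rw [mswap_add, u.L_add _ _ (CgMem_mswap' hx) (CgMem_mswap' hy), mswap_add]
  R_add x y hx hy := by
    show mswap (u.Rm (mswap (x + y))) = mswap (u.Rm (mswap x)) + mswap (u.Rm (mswap y))
    rw [mswap_add, u.R_add _ _ (CgMem_mswap' hx) (CgMem_mswap' hy), mswap_add]
  L_mul x y hx hy := by
    show mswap (u.L (mswap (x * y))) = mswap (u.L (mswap x)) * y
    rw [mswap_mul, u.L_mul _ _ (CgMem_mswap' hx) (CgMem_mswap' hy), mswap_mul, mswap_mswap]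
  R_mul x y hx hy := by
    show mswap (u.Rm (mswap (x * y))) = x * mswap (u.Rm (mswap y))
    rw [mswap_mul, u.R_mul _ _ (CgMem_mswap' hx) (CgMem_mswap' hy), mswap_mul, mswap_mswap]
  compat x y hx hy := by
    have h := u.compat (mswap x) (mswap y) (CgMem_mswap' hx) (CgMem_mswap' hy)
    calc mswap (u.Rm (mswap x)) * y
        = mswap (u.Rm (mswap x) * mswap y) := by rw [mswap_mul, mswap_mswap]
      _ = mswap (mswap x * u.L (mswap y)) := by rw [h]
      _ = x * mswap (u.L (mswap y)) := by rw [mswap_mul, mswap_mswap]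

theorem mswap_me11L (M : Matrix (Fin 2) (Fin 2) B) :
    mswap (me22L (mswap M)) = me11L M := by
  ext i j; fin_cases i <;> fin_cases j <;> simp [mswap, me22L, me11L]

theorem mswap_me22L (M : Matrix (Fin 2) (Fin 2) B) :
    mswap (me11L (mswap M)) = me22L M := by
  ext i j; fin_cases i <;> fin_cases j <;> simp [mswap, me22L, me11L]

theorem mswap_me11R (M : Matrix (Fin 2) (Fin 2) B) :
    mswap (me22R (mswap M)) = me11R M := by
  ext i j; fin_cases i <;> fin_cases j <;> simp [mswap, me22R, me11R]

theorem mswap_me22R (M : Matrix (Fin 2) (Fin 2) B) :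
    mswap (me11R (mswap M)) = me22R M := by
  ext i j; fin_cases i <;> fin_cases j <;> simp [mswap, me22R, me11R]

theorem corner_swap {Bc : G → AddSubgroup B} {g : G} {u v : LinkMult Bc g}
    (huv : CornerUVg Bc g u v) : CornerUVg Bc g⁻¹ (swapLM v) (swapLM u) := by
  obtain ⟨h1, h2, h3, h4⟩ := huv
  refine ⟨fun x hx => ?_, fun x hx => ?_, fun x hx => ?_, fun x hx => ?_⟩
  · show mswap (v.L (mswap (mswap (u.L (mswap x))))) = me11L x
    rw [mswap_mswap, h3 _ (CgMem_mswap' hx), mswap_me11L]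
  · show mswap (u.Rm (mswap (mswap (v.Rm (mswap x))))) = me11R x
    rw [mswap_mswap, h4 _ (CgMem_mswap' hx), mswap_me11R]
  · show mswap (u.L (mswap (mswap (v.L (mswap x))))) = me22L x
    rw [mswap_mswap, h1 _ (CgMem_mswap' hx), mswap_me22L]
  · show mswap (v.Rm (mswap (mswap (u.Rm (mswap x))))) = me22R x
    rw [mswap_mswap, h2 _ (CgMem_mswap' hx), mswap_me22R]

end ExtLM
namespace ExtLM
variable {G : Type} [Group G] {B : Type} [NonUnitalRing B]

section Proj
variable [DecidableEq G] (Bc : G → AddSubgroup B) [DirectSum.Decomposition Bc]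

noncomputable def projC (h : G) (x : B) : B := (DirectSum.decompose Bc x h : B)

theorem projC_mem (h : G) (x : B) : projC Bc h x ∈ Bc h := (DirectSum.decompose Bc x h).2

theorem projC_add (h : G) (x y : B) :
    projC Bc h (x + y) = projC Bc h x + projC Bc h y := by
  simp [projC, DirectSum.decompose_add]

theorem projC_neg (h : G) (x : B) : projC Bc h (-x) = -projC Bc h x := by
  rw [projC, projC, DirectSum.decompose_neg]
  rfl

theorem projC_zero (h : G) : projC Bc h 0 = 0 := by simp [projC]

theorem eq_zero_of_projC (x : B) (hx : ∀ h, projC Bc h x = 0) : x = 0 := by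
  classical
  have := DirectSum.sum_support_decompose Bc x
  rw [← this]
  exact Finset.sum_eq_zero fun i _ => hx i

theorem projC_mul (hgrmul : ∀ (g h : G) (x y : B), x ∈ Bc g → y ∈ Bc h → x * y ∈ Bc (g * h))
    {k : G} {c : B} (hc : c ∈ Bc k) (x : B) (h : G) :
    projC Bc (k * h) (c * x) = c * projC Bc h x := by
  classical
  induction x using DirectSum.Decomposition.inductionOn Bc with
  | zero => simp [projC]
  | @homogeneous i m =>
      rcases m with ⟨m, hm⟩
      by_cases hih : i = h
      · subst hih
        rw [projC, projC, DirectSum.decompose_of_mem_same Bc hm,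
          DirectSum.decompose_of_mem_same Bc (hgrmul _ _ _ _ hc hm)]
      · rw [projC, projC, DirectSum.decompose_of_mem_ne Bc hm hih,
          DirectSum.decompose_of_mem_ne Bc (hgrmul _ _ _ _ hc hm)
            (fun hkk => hih (mul_left_cancel hkk)), mul_zero]
  | add a b ha hb => rw [mul_add, projC_add, projC_add, ha, hb, mul_add]

end Proj

-- ========== the one-sided core ==========

/-- `L_{u}` as a map on `B` (meaningful on `B_{g⁻¹}`). -/
def LuF {Bc : G → AddSubgroup B} {g : G} (u : LinkMult Bc g) (x : B) : B :=
  u.L !![0, 0; x, 0] 0 0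

/-- `L_{v}` as a map on `B` (meaningful on `B_g`). -/
def LvF {Bc : G → AddSubgroup B} {g : G} (v : LinkMult Bc g) (x : B) : B :=
  v.L !![0, x; 0, 0] 1 1

/-- The graph of the extension of `f` to `S·B`. -/
def gra (S : AddSubgroup B) (f : B → B) : AddSubgroup (B × B) :=
  AddSubgroup.closure {p | ∃ x ∈ S, ∃ b : B, p = (x * b, f x * b)}

section Core

variable {Bc : G → AddSubgroup B} {g : G}

theorem annih_Dg {w : B} (hann : ∀ c ∈ Bc g⁻¹, c * w = 0) :
    ∀ e ∈ setMul (Bc g) (Bc g⁻¹), e * w = 0 := by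
  refine setMul_induction (fun s hs t ht => ?_) (by rw [zero_mul])
    (fun x y hx hy => by rw [add_mul, hx, hy, add_zero])
    (fun x hx => by rw [neg_mul, hx, neg_zero])
  rw [mul_assoc, hann t ht, mul_zero]

theorem claim7 (u : LinkMult Bc g) :
    ∀ z ∈ setMul (Bc g⁻¹) (Bc g), u.L !![0, 0; 0, z] 0 0 = 0 := by
  have key : ∀ z, z ∈ setMul (Bc g⁻¹) (Bc g) ∧ u.L !![(0:B), 0; 0, z] 0 0 = 0 → True := fun _ _ => trivial
  suffices h : ∀ z ∈ setMul (Bc g⁻¹) (Bc g),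
      z ∈ setMul (Bc g⁻¹) (Bc g) ∧ u.L !![(0:B), 0; 0, z] 0 0 = 0 by
    exact fun z hz => (h z hz).2
  refine setMul_induction (fun q hq a ha => ⟨mul_mem_setMul hq ha, ?_⟩) ⟨zero_mem _, ?_⟩
    (fun x y hx hy => ⟨add_mem hx.1 hy.1, ?_⟩) (fun x hx => ⟨neg_mem hx.1, ?_⟩)
  · have hqa : (!![0, 0; 0, q * a] : Matrix (Fin 2) (Fin 2) B) = !![0,0;q,0] * !![0,a;0,0] := by
      ext i j; fin_cases i <;> fin_cases j <;> simp [Matrix.mul_apply, Fin.sum_univ_two]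
    rw [hqa, u.L_mul _ _ (CgMem_mE10 hq) (CgMem_mE01 ha)]
    simp [Matrix.mul_apply, Fin.sum_univ_two]
  · have h0 : (!![0, 0; 0, (0:B)] : Matrix (Fin 2) (Fin 2) B) = 0 := by
      ext i j; fin_cases i <;> fin_cases j <;> simp
    rw [h0, L_zero' u]; simp
  · have hadd : (!![0, 0; 0, x + y] : Matrix (Fin 2) (Fin 2) B)
        = !![0,0;0,x] + !![0,0;0,y] := by
      ext i j; fin_cases i <;> fin_cases j <;> simp
    rw [hadd, u.L_add _ _ (CgMem_mE11 hx.1) (CgMem_mE11 hy.1)]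
    simp only [Matrix.add_apply, hx.2, hy.2, add_zero]
  · have hneg : (!![0, 0; 0, -x] : Matrix (Fin 2) (Fin 2) B) = -(!![0,0;0,x]) := by
      ext i j; fin_cases i <;> fin_cases j <;> simp
    rw [hneg, L_neg' u (CgMem_mE11 hx.1)]
    simp only [Matrix.neg_apply, hx.2, neg_zero]

theorem lemC
    (hnd : ∀ (g : G) (x : B), x ∈ Bc g → x ≠ 0 →
      (∃ y ∈ Bc g⁻¹, x * y ≠ 0) ∧ (∃ y ∈ Bc g⁻¹, y * x ≠ 0))
    (u v : LinkMult Bc g) (huv : CornerUVg Bc g u v) :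
    ∀ w ∈ setMul (Bc g) (Bc g⁻¹), (∀ c ∈ Bc g⁻¹, c * w = 0) → w = 0 := by
  intro w hw hann
  set M : Matrix (Fin 2) (Fin 2) B := !![w, 0; 0, 0] with hMdef
  have hM : CgMem Bc g M := CgMem_mE00 hw
  have hN : CgMem Bc g (v.L M) := v.L_mem _ hM
  have hUL : u.L (v.L M) = M := by
    rw [huv.1 _ hM]
    ext i j; fin_cases i <;> fin_cases j <;> simp [me11L, hMdef]
  have hshape : v.L M = me22L (v.L M) := by
    have h3 := huv.2.2.1 (v.L M) hN
    rw [hUL] at h3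
    exact h3
  have h10zero : (v.L M) 1 0 = 0 := by
    by_contra hne
    obtain ⟨y, hy, hyne⟩ := (hnd g⁻¹ _ hN.2.2.1 hne).2
    rw [inv_inv] at hy
    apply hyne
    have hA : CgMem Bc g !![0, y; 0, 0] := CgMem_mE01 hy
    have hc := v.compat !![0, y; 0, 0] M hA hM
    have e1 : (!![0, y; 0, 0] * v.L M) 0 0 = y * (v.L M) 1 0 := by
      simp [Matrix.mul_apply, Fin.sum_univ_two]
    have e2 : ((v.Rm !![0, y; 0, 0]) * M) 0 0 = (v.Rm !![0, y; 0, 0]) 0 0 * w := by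
      simp [hMdef, Matrix.mul_apply, Fin.sum_univ_two]
    rw [← e1, ← hc, e2]
    exact annih_Dg hann _ (v.R_mem _ hA).1
  have hNform : v.L M = !![0, 0; 0, (v.L M) 1 1] := by
    conv_lhs => rw [hshape]
    ext i j; fin_cases i <;> fin_cases j <;> simp [me22L, h10zero]
  have hw' : w = u.L !![0, 0; 0, (v.L M) 1 1] 0 0 := by
    rw [← hNform, hUL]; simp [hMdef]
  rw [hw']
  exact claim7 u _ hN.2.2.2

end Core
end ExtLM
namespace ExtLM
variable {G : Type} [Group G] {B : Type} [NonUnitalRing B]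

section Core2
variable [DecidableEq G] {Bc : G → AddSubgroup B} [DirectSum.Decomposition Bc] {g : G}

theorem keyW
    (hgrmul : ∀ (g h : G) (x y : B), x ∈ Bc g → y ∈ Bc h → x * y ∈ Bc (g * h))
    (hnd : ∀ (g : G) (x : B), x ∈ Bc g → x ≠ 0 →
      (∃ y ∈ Bc g⁻¹, x * y ≠ 0) ∧ (∃ y ∈ Bc g⁻¹, y * x ≠ 0))
    (u v : LinkMult Bc g) (huv : CornerUVg Bc g u v) :
    ∀ t ∈ setMul (setMul (Bc g) (Bc g⁻¹)) (⊤ : AddSubgroup B),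
      (∀ c ∈ Bc g⁻¹, c * t = 0) → t = 0 := by
  have hDg1 : ∀ e ∈ setMul (Bc g) (Bc g⁻¹), e ∈ Bc 1 := by
    intro e he
    refine setMul_le (fun s hs t ht => ?_) he
    simpa using hgrmul _ _ _ _ hs ht
  intro t ht hann
  -- components of t lie in setMul (Bc g) (Bc (g⁻¹ * h))
  have hproj : ∀ h : G, projC Bc h t ∈ setMul (Bc g) (Bc (g⁻¹ * h)) := by
    intro h
    refine setMul_induction (p := fun t => projC Bc h t ∈ setMul (Bc g) (Bc (g⁻¹ * h)))
      (fun e he b _ => ?_)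
      (by show projC Bc h 0 ∈ _; rw [projC_zero]; exact zero_mem _)
      (fun x y hx hy => by
        show projC Bc h (x + y) ∈ _
        rw [projC_add]; exact add_mem hx hy)
      (fun x hx => by
        show projC Bc h (-x) ∈ _
        rw [projC_neg]; exact neg_mem hx) t ht
    show projC Bc h (e * b) ∈ _
    have hp : projC Bc h (e * b) = e * projC Bc h b := by
      have := projC_mul Bc hgrmul (hDg1 e he) b h
      rwa [one_mul] at this
    rw [hp]
    refine setMul_induction (p := fun e => e * projC Bc h b ∈ setMul (Bc g) (Bc (g⁻¹ * h)))
      (fun s hs q hq => ?_)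
      (by show (0:B) * _ ∈ _; rw [zero_mul]; exact zero_mem _)
      (fun x y hx hy => by
        show (x + y) * _ ∈ _
        rw [add_mul]; exact add_mem hx hy)
      (fun x hx => by
        show (-x) * _ ∈ _
        rw [neg_mul]; exact neg_mem hx) e he
    show s * q * projC Bc h b ∈ _
    rw [mul_assoc]
    exact mul_mem_setMul hs (hgrmul _ _ _ _ hq (projC_mem Bc h b))
  have hannproj : ∀ h, ∀ c ∈ Bc g⁻¹, c * projC Bc h t = 0 := by
    intro h c hc
    have h1 := projC_mul Bc hgrmul hc t h
    rw [hann c hc, projC_zero] at h1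
    exact h1.symm
  apply eq_zero_of_projC Bc
  intro h
  by_contra hne
  obtain ⟨y, hy, hyne⟩ := (hnd h _ (projC_mem Bc h t) hne).1
  apply hyne
  have hmem : projC Bc h t * y ∈ setMul (Bc g) (Bc g⁻¹) := by
    refine setMul_induction (p := fun x => x * y ∈ setMul (Bc g) (Bc g⁻¹))
      (fun s hs d hd => ?_)
      (by show (0:B) * y ∈ _; rw [zero_mul]; exact zero_mem _)
      (fun a b ha hb => by
        show (a + b) * y ∈ _
        rw [add_mul]; exact add_mem ha hb)
      (fun a ha => by
        show (-a) * y ∈ _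
        rw [neg_mul]; exact neg_mem ha) _ (hproj h)
    show s * d * y ∈ _
    rw [mul_assoc]
    refine mul_mem_setMul hs ?_
    have := hgrmul _ _ _ _ hd hy
    simpa using this
  refine lemC hnd u v huv _ hmem ?_
  intro c hc
  rw [← mul_assoc, hannproj h c hc, zero_mul]

-- ===== Lu lemmas =====

theorem Lu_mem (u : LinkMult Bc g) {x : B} (hx : x ∈ Bc g⁻¹) :
    LuF u x ∈ setMul (Bc g) (Bc g⁻¹) :=
  (u.L_mem _ (CgMem_mE10 hx)).1

theorem Lu_zero (u : LinkMult Bc g) : LuF u (0 : B) = 0 := by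
  have h0 : (!![0, 0; (0:B), 0] : Matrix (Fin 2) (Fin 2) B) = 0 := by
    ext i j; fin_cases i <;> fin_cases j <;> simp
  rw [LuF, h0, L_zero' u]; simp

theorem Lu_add (u : LinkMult Bc g) {x y : B} (hx : x ∈ Bc g⁻¹) (hy : y ∈ Bc g⁻¹) :
    LuF u (x + y) = LuF u x + LuF u y := by
  have hadd : (!![0, 0; x + y, 0] : Matrix (Fin 2) (Fin 2) B) = !![0,0;x,0] + !![0,0;y,0] := by
    ext i j; fin_cases i <;> fin_cases j <;> simp
  rw [LuF, hadd, u.L_add _ _ (CgMem_mE10 hx) (CgMem_mE10 hy)]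
  rfl

theorem Lu_neg (u : LinkMult Bc g) {x : B} (hx : x ∈ Bc g⁻¹) :
    LuF u (-x) = -LuF u x := by
  have hneg : (!![0, 0; -x, 0] : Matrix (Fin 2) (Fin 2) B) = -(!![0,0;x,0]) := by
    ext i j; fin_cases i <;> fin_cases j <;> simp
  rw [LuF, hneg, L_neg' u (CgMem_mE10 hx)]
  rfl

theorem Lu_smul (u : LinkMult Bc g) {q m : B} (hq : q ∈ Bc g⁻¹)
    (hm : m ∈ setMul (Bc g) (Bc g⁻¹)) : LuF u (q * m) = LuF u q * m := by
  have hqm : (!![0, 0; q * m, 0] : Matrix (Fin 2) (Fin 2) B) = !![0,0;q,0] * !![m,0;0,0] := by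
    ext i j; fin_cases i <;> fin_cases j <;> simp [Matrix.mul_apply, Fin.sum_univ_two]
  rw [LuF, hqm, u.L_mul _ _ (CgMem_mE10 hq) (CgMem_mE00 hm)]
  simp [LuF, Matrix.mul_apply, Fin.sum_univ_two]

theorem cLu (u : LinkMult Bc g) {c x : B} (hc : c ∈ Bc g⁻¹) (hx : x ∈ Bc g⁻¹) :
    c * LuF u x = (u.Rm !![0, 0; c, 0]) 1 1 * x := by
  have hcomp := u.compat !![0,0;c,0] !![0,0;x,0] (CgMem_mE10 hc) (CgMem_mE10 hx)
  have e1 : (u.Rm !![0,0;c,0] * !![0,0;x,0]) 1 0 = (u.Rm !![0, 0; c, 0]) 1 1 * x := by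
    simp [Matrix.mul_apply, Fin.sum_univ_two]
  have e2 : (!![0,0;c,0] * u.L !![0,0;x,0]) 1 0 = c * LuF u x := by
    simp [LuF, Matrix.mul_apply, Fin.sum_univ_two]
  rw [← e2, ← hcomp, e1]

theorem Lu_shape
    (hnd : ∀ (g : G) (x : B), x ∈ Bc g → x ≠ 0 →
      (∃ y ∈ Bc g⁻¹, x * y ≠ 0) ∧ (∃ y ∈ Bc g⁻¹, y * x ≠ 0))
    (u v : LinkMult Bc g) (huv : CornerUVg Bc g u v) {x : B} (hx : x ∈ Bc g⁻¹) :
    u.L !![0, 0; x, 0] = !![LuF u x, 0; 0, 0] := by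
  set X : Matrix (Fin 2) (Fin 2) B := !![0,0;x,0] with hXdef
  have hX : CgMem Bc g X := CgMem_mE10 hx
  have h3 := huv.2.2.1 X hX
  have hXfix : me22L X = X := by
    ext i j; fin_cases i <;> fin_cases j <;> simp [me22L, hXdef]
  have h1 := huv.1 (u.L X) (u.L_mem X hX)
  rw [h3, hXfix] at h1
  have hbeta : (u.L X) 0 1 = 0 := by
    by_contra hne
    obtain ⟨y, hy, hyne⟩ := (hnd g _ (u.L_mem X hX).2.1 hne).2
    apply hyne
    have hc := u.compat !![0,0;y,0] X (CgMem_mE10 hy) hX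
    have e1 : (u.Rm !![0,0;y,0] * X) 1 1 = 0 := by
      simp [hXdef, Matrix.mul_apply, Fin.sum_univ_two]
    have e2 : (!![0,0;y,0] * u.L X) 1 1 = y * (u.L X) 0 1 := by
      simp [Matrix.mul_apply, Fin.sum_univ_two]
    rw [← e2, ← hc, e1]
  ext i j
  fin_cases i <;> fin_cases j
  · show u.L X 0 0 = !![LuF u x, 0; 0, 0] 0 0
    simp [LuF, hXdef]
  · show u.L X 0 1 = !![LuF u x, 0; 0, 0] 0 1
    simp [hbeta]
  · show u.L X 1 0 = !![LuF u x, 0; 0, 0] 1 0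
    conv_lhs => rw [h1]
    simp [me11L]
  · show u.L X 1 1 = !![LuF u x, 0; 0, 0] 1 1
    conv_lhs => rw [h1]
    simp [me11L]

theorem V_of_Lu
    (hnd : ∀ (g : G) (x : B), x ∈ Bc g → x ≠ 0 →
      (∃ y ∈ Bc g⁻¹, x * y ≠ 0) ∧ (∃ y ∈ Bc g⁻¹, y * x ≠ 0))
    (u v : LinkMult Bc g) (huv : CornerUVg Bc g u v) {x : B} (hx : x ∈ Bc g⁻¹) :
    (v.L !![LuF u x, 0; 0, 0]) 1 0 = x := by
  rw [← Lu_shape hnd u v huv hx]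
  rw [huv.2.2.1 _ (CgMem_mE10 hx)]
  simp [me22L]

end Core2
end ExtLM
namespace ExtLM
variable {G : Type} [Group G] {B : Type} [NonUnitalRing B]

section Graph
variable [DecidableEq G] {Bc : G → AddSubgroup B} [DirectSum.Decomposition Bc] {g : G}

theorem gra_invariant (u : LinkMult Bc g) :
    ∀ p ∈ gra (Bc g⁻¹) (LuF u),
      p.2 ∈ setMul (setMul (Bc g) (Bc g⁻¹)) (⊤ : AddSubgroup B) ∧
      ∀ c ∈ Bc g⁻¹, c * p.2 = (u.Rm !![0, 0; c, 0]) 1 1 * p.1 := by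
  intro p hp
  refine AddSubgroup.closure_induction ?_ ?_ ?_ ?_ hp
  · rintro q ⟨x, hx, b, rfl⟩
    refine ⟨mul_mem_setMul (Lu_mem u hx) (AddSubgroup.mem_top b), fun c hc => ?_⟩
    show c * (LuF u x * b) = _ * (x * b)
    rw [← mul_assoc, cLu u hc hx, mul_assoc]
  · exact ⟨zero_mem _, fun c hc => by simp⟩
  · rintro p q _ _ ⟨hp1, hp2⟩ ⟨hq1, hq2⟩
    refine ⟨add_mem hp1 hq1, fun c hc => ?_⟩
    show c * (p.2 + q.2) = _ * (p.1 + q.1)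
    rw [mul_add, hp2 c hc, hq2 c hc, mul_add]
  · rintro p _ ⟨h1, h2⟩
    refine ⟨neg_mem h1, fun c hc => ?_⟩
    show c * (-p.2) = _ * (-p.1)
    rw [mul_neg, h2 c hc, mul_neg]

theorem gra_graph
    (hgrmul : ∀ (g h : G) (x y : B), x ∈ Bc g → y ∈ Bc h → x * y ∈ Bc (g * h))
    (hnd : ∀ (g : G) (x : B), x ∈ Bc g → x ≠ 0 →
      (∃ y ∈ Bc g⁻¹, x * y ≠ 0) ∧ (∃ y ∈ Bc g⁻¹, y * x ≠ 0))
    (u v : LinkMult Bc g) (huv : CornerUVg Bc g u v) :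
    ∀ r : B, ((0 : B), r) ∈ gra (Bc g⁻¹) (LuF u) → r = 0 := by
  intro r hr
  obtain ⟨h1, h2⟩ := gra_invariant u _ hr
  refine keyW hgrmul hnd u v huv _ h1 ?_
  intro c hc
  have h3 := h2 c hc
  simpa using h3

theorem gra_total (u : LinkMult Bc g) :
    ∀ s ∈ setMul (Bc g⁻¹) (⊤ : AddSubgroup B),
      ∃ r, (s, r) ∈ gra (Bc g⁻¹) (LuF u) := by
  refine setMul_induction
    (fun x hx b _ => ⟨LuF u x * b, AddSubgroup.subset_closure ⟨x, hx, b, rfl⟩⟩)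
    ⟨0, ?_⟩ ?_ ?_
  · have : ((0 : B), (0 : B)) = (0 : B × B) := rfl
    rw [this]; exact zero_mem _
  · rintro x y ⟨r, hr⟩ ⟨r', hr'⟩
    exact ⟨r + r', add_mem hr hr'⟩
  · rintro x ⟨r, hr⟩
    exact ⟨-r, neg_mem hr⟩

theorem gra_fst {S : AddSubgroup B} {f : B → B} :
    ∀ p ∈ gra S f, p.1 ∈ setMul S (⊤ : AddSubgroup B) := by
  intro p hp
  refine AddSubgroup.closure_induction ?_ ?_ ?_ ?_ hp
  · rintro q ⟨x, hx, b, rfl⟩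
    exact mul_mem_setMul hx (AddSubgroup.mem_top b)
  · exact zero_mem _
  · rintro p q _ _ h1 h2
    exact add_mem h1 h2
  · rintro p _ h1
    exact neg_mem h1

theorem DgB_le :
    setMul (setMul (Bc g) (Bc g⁻¹)) (⊤ : AddSubgroup B) ≤ setMul (Bc g) (⊤ : AddSubgroup B) := by
  refine setMul_le (fun e he b _ => ?_)
  refine setMul_induction (p := fun e => e * b ∈ setMul (Bc g) (⊤ : AddSubgroup B))
    (fun s hs t _ => ?_)
    (by show (0:B) * b ∈ _; rw [zero_mul]; exact zero_mem _)
    (fun x y hx hy => by show (x + y) * b ∈ _; rw [add_mul]; exact add_mem hx hy)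
    (fun x hx => by show (-x) * b ∈ _; rw [neg_mul]; exact neg_mem hx) e he
  show s * t * b ∈ _
  rw [mul_assoc]
  exact mul_mem_setMul hs (AddSubgroup.mem_top _)

theorem gra_snd (u : LinkMult Bc g) :
    ∀ p ∈ gra (Bc g⁻¹) (LuF u), p.2 ∈ setMul (Bc g) (⊤ : AddSubgroup B) :=
  fun p hp => DgB_le (gra_invariant u p hp).1

theorem gra_mulr {S : AddSubgroup B} {f : B → B} :
    ∀ p ∈ gra S f, ∀ b : B, (p.1 * b, p.2 * b) ∈ gra S f := by
  intro p hp
  refine AddSubgroup.closure_induction ?_ ?_ ?_ ?_ hp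
  · rintro q ⟨x, hx, c, rfl⟩ b
    show (x * c * b, f x * c * b) ∈ gra S f
    rw [mul_assoc, mul_assoc]
    exact AddSubgroup.subset_closure ⟨x, hx, c * b, rfl⟩
  · intro b
    show ((0:B) * b, (0:B) * b) ∈ gra S f
    rw [zero_mul]
    exact zero_mem _
  · rintro p q _ _ h1 h2 b
    have : ((p + q).1 * b, (p + q).2 * b) = (p.1 * b, p.2 * b) + (q.1 * b, q.2 * b) := by
      show ((p.1 + q.1) * b, (p.2 + q.2) * b) = _
      rw [add_mul, add_mul]; rfl
    rw [this]
    exact add_mem (h1 b) (h2 b)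
  · rintro p _ h1 b
    have : ((-p).1 * b, (-p).2 * b) = -(p.1 * b, p.2 * b) := by
      show ((-p.1) * b, (-p.2) * b) = _
      rw [neg_mul, neg_mul]; rfl
    rw [this]
    exact neg_mem (h1 b)

theorem gra_of_mem
    (hgrmul : ∀ (g h : G) (x y : B), x ∈ Bc g → y ∈ Bc h → x * y ∈ Bc (g * h))
    (u : LinkMult Bc g)
    (hpr' : setMul (setMul (Bc g⁻¹) (Bc g)) (Bc g⁻¹) = Bc g⁻¹) :
    ∀ x ∈ Bc g⁻¹, (x, LuF u x) ∈ gra (Bc g⁻¹) (LuF u) := by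
  have hD'1 : ∀ e ∈ setMul (Bc g⁻¹) (Bc g), e ∈ Bc 1 := by
    intro e he
    refine setMul_le (fun s hs t ht => ?_) he
    simpa using hgrmul _ _ _ _ hs ht
  intro x hx
  have hx' : x ∈ setMul (setMul (Bc g⁻¹) (Bc g)) (Bc g⁻¹) := by rw [hpr']; exact hx
  suffices h : x ∈ Bc g⁻¹ ∧ (x, LuF u x) ∈ gra (Bc g⁻¹) (LuF u) from h.2
  refine setMul_induction
    (p := fun x => x ∈ Bc g⁻¹ ∧ (x, LuF u x) ∈ gra (Bc g⁻¹) (LuF u))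
    (fun e he q hq => ?_) ⟨zero_mem _, ?_⟩ (fun a b ha hb => ⟨add_mem ha.1 hb.1, ?_⟩)
    (fun a ha => ⟨neg_mem ha.1, ?_⟩) x hx'
  · have hmemeq : e * q ∈ Bc g⁻¹ := by
      have := hgrmul _ _ _ _ (hD'1 e he) hq
      simpa using this
    refine ⟨hmemeq, ?_⟩
    suffices hh : e ∈ setMul (Bc g⁻¹) (Bc g) ∧ (e * q, LuF u (e * q)) ∈ gra (Bc g⁻¹) (LuF u)
      from hh.2
    refine setMul_induction
      (p := fun e => e ∈ setMul (Bc g⁻¹) (Bc g) ∧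
        (e * q, LuF u (e * q)) ∈ gra (Bc g⁻¹) (LuF u))
      (fun q' hq' a ha => ⟨mul_mem_setMul hq' ha, ?_⟩) ⟨zero_mem _, ?_⟩
      (fun e1 e2 h1 h2 => ⟨add_mem h1.1 h2.1, ?_⟩) (fun e1 h1 => ⟨neg_mem h1.1, ?_⟩) e he
    · have haq : a * q ∈ setMul (Bc g) (Bc g⁻¹) := mul_mem_setMul ha hq
      have hLs : LuF u (q' * (a * q)) = LuF u q' * (a * q) := Lu_smul u hq' haq
      rw [mul_assoc, hLs]
      exact AddSubgroup.subset_closure ⟨q', hq', a * q, rfl⟩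
    · show ((0:B) * q, LuF u ((0:B) * q)) ∈ _
      rw [zero_mul, Lu_zero u]
      exact zero_mem _
    · have m1 : e1 * q ∈ Bc g⁻¹ := by
        have := hgrmul _ _ _ _ (hD'1 e1 h1.1) hq; simpa using this
      have m2 : e2 * q ∈ Bc g⁻¹ := by
        have := hgrmul _ _ _ _ (hD'1 e2 h2.1) hq; simpa using this
      have heq : ((e1 + e2) * q, LuF u ((e1 + e2) * q))
          = (e1 * q, LuF u (e1 * q)) + (e2 * q, LuF u (e2 * q)) := by
        rw [add_mul, Lu_add u m1 m2]; rfl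
      rw [heq]
      exact add_mem h1.2 h2.2
    · have m1 : e1 * q ∈ Bc g⁻¹ := by
        have := hgrmul _ _ _ _ (hD'1 e1 h1.1) hq; simpa using this
      have heq : ((-e1) * q, LuF u ((-e1) * q)) = -(e1 * q, LuF u (e1 * q)) := by
        rw [neg_mul, Lu_neg u m1]; rfl
      rw [heq]
      exact neg_mem h1.2
  · rw [Lu_zero u]
    exact zero_mem _
  · have heq : (a + b, LuF u (a + b)) = (a, LuF u a) + (b, LuF u b) := by
      rw [Lu_add u ha.1 hb.1]; rfl
    rw [heq]
    exact add_mem ha.2 hb.2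
  · have heq : (-a, LuF u (-a)) = -(a, LuF u a) := by
      rw [Lu_neg u ha.1]; rfl
    rw [heq]
    exact neg_mem ha.2

theorem VmulB (v : LinkMult Bc g) :
    ∀ α ∈ setMul (Bc g) (Bc g⁻¹), ∀ b : B,
      (α * b, (v.L !![α, 0; 0, 0]) 1 0 * b) ∈ gra (Bc g) (LvF v) := by
  intro α hα
  suffices h : α ∈ setMul (Bc g) (Bc g⁻¹) ∧ ∀ b : B,
      (α * b, (v.L !![α, 0; 0, 0]) 1 0 * b) ∈ gra (Bc g) (LvF v) from h.2
  refine setMul_induction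
    (p := fun α => α ∈ setMul (Bc g) (Bc g⁻¹) ∧ ∀ b : B,
      (α * b, (v.L !![α, 0; 0, 0]) 1 0 * b) ∈ gra (Bc g) (LvF v))
    (fun a ha q hq => ⟨mul_mem_setMul ha hq, fun b => ?_⟩) ⟨zero_mem _, fun b => ?_⟩
    (fun a1 a2 h1 h2 => ⟨add_mem h1.1 h2.1, fun b => ?_⟩)
    (fun a1 h1 => ⟨neg_mem h1.1, fun b => ?_⟩) α hα
  · have hAQ : (!![a * q, 0; 0, 0] : Matrix (Fin 2) (Fin 2) B)
        = !![0, a; 0, 0] * !![0, 0; q, 0] := by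
      ext i j; fin_cases i <;> fin_cases j <;> simp [Matrix.mul_apply, Fin.sum_univ_two]
    have hent : (v.L !![a * q, 0; 0, 0]) 1 0 = LvF v a * q := by
      rw [hAQ, v.L_mul _ _ (CgMem_mE01 ha) (CgMem_mE10 hq)]
      simp [LvF, Matrix.mul_apply, Fin.sum_univ_two]
    rw [hent, mul_assoc, mul_assoc]
    exact AddSubgroup.subset_closure ⟨a, ha, q * b, rfl⟩
  · have h0 : (!![(0:B), 0; 0, 0] : Matrix (Fin 2) (Fin 2) B) = 0 := by
      ext i j; fin_cases i <;> fin_cases j <;> simp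
    have : (v.L !![(0:B), 0; 0, 0]) 1 0 = 0 := by rw [h0, L_zero' v]; simp
    rw [this, zero_mul]
    exact zero_mem _
  · have hadd : (!![a1 + a2, 0; 0, 0] : Matrix (Fin 2) (Fin 2) B)
        = !![a1, 0; 0, 0] + !![a2, 0; 0, 0] := by
      ext i j; fin_cases i <;> fin_cases j <;> simp
    have hent : (v.L !![a1 + a2, 0; 0, 0]) 1 0
        = (v.L !![a1, 0; 0, 0]) 1 0 + (v.L !![a2, 0; 0, 0]) 1 0 := by
      rw [hadd, v.L_add _ _ (CgMem_mE00 h1.1) (CgMem_mE00 h2.1)]; rfl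
    have heq : ((a1 + a2) * b, (v.L !![a1 + a2, 0; 0, 0]) 1 0 * b)
        = (a1 * b, (v.L !![a1, 0; 0, 0]) 1 0 * b)
          + (a2 * b, (v.L !![a2, 0; 0, 0]) 1 0 * b) := by
      rw [hent, add_mul, add_mul]; rfl
    rw [heq]
    exact add_mem (h1.2 b) (h2.2 b)
  · have hneg : (!![-a1, 0; 0, 0] : Matrix (Fin 2) (Fin 2) B) = -(!![a1, 0; 0, 0]) := by
      ext i j; fin_cases i <;> fin_cases j <;> simp
    have hent : (v.L !![-a1, 0; 0, 0]) 1 0 = -((v.L !![a1, 0; 0, 0]) 1 0) := by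
      rw [hneg, L_neg' v (CgMem_mE00 h1.1)]; rfl
    have heq : ((-a1) * b, (v.L !![-a1, 0; 0, 0]) 1 0 * b)
        = -(a1 * b, (v.L !![a1, 0; 0, 0]) 1 0 * b) := by
      rw [hent, neg_mul, neg_mul]; rfl
    rw [heq]
    exact neg_mem (h1.2 b)

theorem roundtrip
    (hnd : ∀ (g : G) (x : B), x ∈ Bc g → x ≠ 0 →
      (∃ y ∈ Bc g⁻¹, x * y ≠ 0) ∧ (∃ y ∈ Bc g⁻¹, y * x ≠ 0))
    (u v : LinkMult Bc g) (huv : CornerUVg Bc g u v) :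
    ∀ p ∈ gra (Bc g⁻¹) (LuF u), (p.2, p.1) ∈ gra (Bc g) (LvF v) := by
  intro p hp
  refine AddSubgroup.closure_induction ?_ ?_ ?_ ?_ hp
  · rintro q ⟨x, hx, b, rfl⟩
    show (LuF u x * b, x * b) ∈ gra (Bc g) (LvF v)
    have h1 := VmulB v (LuF u x) (Lu_mem u hx) b
    rwa [V_of_Lu hnd u v huv hx] at h1
  · show ((0:B), (0:B)) ∈ _
    exact zero_mem _
  · rintro p q _ _ h1 h2
    exact add_mem h1 h2
  · rintro p _ h1
    exact neg_mem h1

end Graph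
end ExtLM
namespace ExtLM
variable {G : Type} [Group G] {B : Type} [NonUnitalRing B]

open Classical in
noncomputable def extFun (Γ : AddSubgroup (B × B)) : B → B :=
  fun s => if h : ∃ r, (s, r) ∈ Γ then h.choose else 0

theorem extFun_eq {Γ : AddSubgroup (B × B)} (hΓ : ∀ r : B, ((0 : B), r) ∈ Γ → r = 0)
    {s r : B} (hsr : (s, r) ∈ Γ) : extFun Γ s = r := by
  have hex : ∃ r, (s, r) ∈ Γ := ⟨r, hsr⟩
  rw [extFun]
  rw [dif_pos hex]
  have h2 := hex.choose_spec
  have h4 := sub_mem h2 hsr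
  have h5 : (s, hex.choose) - (s, r) = ((0 : B), hex.choose - r) := by
    apply Prod.ext <;> simp
  rw [h5] at h4
  exact sub_eq_zero.1 (hΓ _ h4)

theorem extFun_graph {Γ : AddSubgroup (B × B)} (hΓ : ∀ r : B, ((0 : B), r) ∈ Γ → r = 0)
    {s : B} (hs : ∃ r, (s, r) ∈ Γ) : (s, extFun Γ s) ∈ Γ := by
  obtain ⟨r, hr⟩ := hs
  rw [extFun_eq hΓ hr]
  exact hr

theorem LuF_swapLM {Bc : G → AddSubgroup B} {g : G} (v : LinkMult Bc g) :
    LuF (swapLM v) = LvF v := by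
  funext a
  show mswap (v.L (mswap !![0, 0; a, 0])) 0 0 = v.L !![0, a; 0, 0] 1 1
  have h1 : mswap (!![0, 0; a, 0] : Matrix (Fin 2) (Fin 2) B) = !![0, a; 0, 0] := by
    ext i j; fin_cases i <;> fin_cases j <;> simp [mswap]
  rw [h1]; simp [mswap]

theorem LvF_swapLM {Bc : G → AddSubgroup B} {g : G} (u : LinkMult Bc g) :
    LvF (swapLM u) = LuF u := by
  funext a
  show mswap (u.L (mswap !![0, a; 0, 0])) 1 1 = u.L !![0, 0; a, 0] 0 0
  have h1 : mswap (!![0, a; 0, 0] : Matrix (Fin 2) (Fin 2) B) = !![0, 0; a, 0] := by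
    ext i j; fin_cases i <;> fin_cases j <;> simp [mswap]
  rw [h1]; simp [mswap]

end ExtLM
/-- STATEMENT 16, Lemma 5.1: let `B = ⊕_g B_g` be homogeneously
non-degenerate, satisfy `B_g B_{g⁻¹} B_g = B_g` and admit, for each `g`,
multipliers `u_g, v_g` of `C_g` with `u_g v_g = e₁₁`, `v_g u_g = e₂₂`.  Then
`L_{u_g} : B_{g⁻¹} → D_g` extends to an isomorphism of right `B`-modules
`L̃_{u_g} : B_{g⁻¹}B → B_gB`, `xy ↦ (u_g x)y`, with inverse
`L̃_{v_g} : B_gB → B_{g⁻¹}B`, `xy ↦ (v_g x)y`. -/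
theorem extend_left_multiplier {G : Type} [Group G] [DecidableEq G]
    {B : Type} [NonUnitalRing B]
    (Bc : G → AddSubgroup B)
    (hdir : DirectSum.IsInternal Bc)
    (hgrmul : ∀ (g h : G) (x y : B), x ∈ Bc g → y ∈ Bc h → x * y ∈ Bc (g * h))
    (hnd : ∀ (g : G) (x : B), x ∈ Bc g → x ≠ 0 →
      (∃ y ∈ Bc g⁻¹, x * y ≠ 0) ∧ (∃ y ∈ Bc g⁻¹, y * x ≠ 0))
    (hpr : ∀ g : G, setMul (setMul (Bc g) (Bc g⁻¹)) (Bc g) = Bc g)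
    (u v : ∀ g : G, LinkMult Bc g)
    (huv : ∀ g : G, CornerUVg Bc g (u g) (v g))
    (g : G) :
    ∃ ℓ ℓ' : B → B,
      (∀ x ∈ setMul (Bc g⁻¹) ⊤, ℓ x ∈ setMul (Bc g) ⊤) ∧
      (∀ x ∈ setMul (Bc g) ⊤, ℓ' x ∈ setMul (Bc g⁻¹) ⊤) ∧
      (∀ x y, x ∈ setMul (Bc g⁻¹) ⊤ → y ∈ setMul (Bc g⁻¹) ⊤ → ℓ (x + y) = ℓ x + ℓ y) ∧
      (∀ x y, x ∈ setMul (Bc g) ⊤ → y ∈ setMul (Bc g) ⊤ → ℓ' (x + y) = ℓ' x + ℓ' y) ∧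
      (∀ x b, x ∈ setMul (Bc g⁻¹) ⊤ → ℓ (x * b) = ℓ x * b) ∧
      (∀ x b, x ∈ setMul (Bc g) ⊤ → ℓ' (x * b) = ℓ' x * b) ∧
      (∀ x y : B, x ∈ Bc g⁻¹ → ℓ (x * y) = ((u g).L !![0, 0; x, 0]) 0 0 * y) ∧
      (∀ x y : B, x ∈ Bc g → ℓ' (x * y) = ((v g).L !![0, x; 0, 0]) 1 1 * y) ∧
      (∀ x ∈ Bc g⁻¹, ℓ x = ((u g).L !![0, 0; x, 0]) 0 0) ∧
      (∀ x ∈ Bc g, ℓ' x = ((v g).L !![0, x; 0, 0]) 1 1) ∧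
      (∀ x ∈ setMul (Bc g⁻¹) ⊤, ℓ' (ℓ x) = x) ∧
      (∀ x ∈ setMul (Bc g) ⊤, ℓ (ℓ' x) = x) := by
  classical
  haveI : DirectSum.Decomposition Bc := hdir.chooseDecomposition
  have huv2 : CornerUVg Bc g⁻¹ (ExtLM.swapLM (v g)) (ExtLM.swapLM (u g)) :=
    ExtLM.corner_swap (huv g)
  set Γ₁ := ExtLM.gra (Bc g⁻¹) (ExtLM.LuF (u g)) with hΓ₁
  set Γ₂ := ExtLM.gra (Bc g) (ExtLM.LvF (v g)) with hΓ₂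
  have graphzero₁ : ∀ r : B, ((0 : B), r) ∈ Γ₁ → r = 0 :=
    ExtLM.gra_graph hgrmul hnd (u g) (v g) (huv g)
  have graphzero₂ : ∀ r : B, ((0 : B), r) ∈ Γ₂ → r = 0 := by
    have h := ExtLM.gra_graph (g := g⁻¹) hgrmul hnd
      (ExtLM.swapLM (v g)) (ExtLM.swapLM (u g)) huv2
    simpa only [inv_inv, ExtLM.LuF_swapLM] using h
  have total₁ : ∀ s ∈ setMul (Bc g⁻¹) (⊤ : AddSubgroup B), ∃ r, (s, r) ∈ Γ₁ :=
    ExtLM.gra_total (u g)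
  have total₂ : ∀ s ∈ setMul (Bc g) (⊤ : AddSubgroup B), ∃ r, (s, r) ∈ Γ₂ := by
    have h := ExtLM.gra_total (g := g⁻¹) (ExtLM.swapLM (v g))
    simpa only [inv_inv, ExtLM.LuF_swapLM] using h
  have snd₁ : ∀ p ∈ Γ₁, p.2 ∈ setMul (Bc g) (⊤ : AddSubgroup B) := ExtLM.gra_snd (u g)
  have snd₂ : ∀ p ∈ Γ₂, p.2 ∈ setMul (Bc g⁻¹) (⊤ : AddSubgroup B) := by
    have h := ExtLM.gra_snd (g := g⁻¹) (ExtLM.swapLM (v g))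
    simpa only [inv_inv, ExtLM.LuF_swapLM] using h
  have ofmem₁ : ∀ x ∈ Bc g⁻¹, (x, ExtLM.LuF (u g) x) ∈ Γ₁ := by
    refine ExtLM.gra_of_mem hgrmul (u g) ?_
    simpa only [inv_inv] using hpr g⁻¹
  have ofmem₂ : ∀ x ∈ Bc g, (x, ExtLM.LvF (v g) x) ∈ Γ₂ := by
    have hpr2 : setMul (setMul (Bc g⁻¹⁻¹) (Bc g⁻¹)) (Bc g⁻¹⁻¹) = Bc g⁻¹⁻¹ := by
      simpa only [inv_inv] using hpr g
    have h := ExtLM.gra_of_mem (g := g⁻¹) hgrmul (ExtLM.swapLM (v g)) hpr2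
    simpa only [inv_inv, ExtLM.LuF_swapLM] using h
  have rt₁ : ∀ p ∈ Γ₁, (p.2, p.1) ∈ Γ₂ :=
    ExtLM.roundtrip hnd (u g) (v g) (huv g)
  have rt₂ : ∀ p ∈ Γ₂, (p.2, p.1) ∈ Γ₁ := by
    have h := ExtLM.roundtrip (g := g⁻¹) hnd
      (ExtLM.swapLM (v g)) (ExtLM.swapLM (u g)) huv2
    simpa only [inv_inv, ExtLM.LuF_swapLM, ExtLM.LvF_swapLM] using h
  refine ⟨ExtLM.extFun Γ₁, ExtLM.extFun Γ₂, ?_, ?_, ?_, ?_, ?_, ?_, ?_, ?_, ?_, ?_, ?_, ?_⟩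
  · intro x hx
    exact snd₁ _ (ExtLM.extFun_graph graphzero₁ (total₁ x hx))
  · intro x hx
    exact snd₂ _ (ExtLM.extFun_graph graphzero₂ (total₂ x hx))
  · intro x y hx hy
    exact ExtLM.extFun_eq graphzero₁
      (add_mem (ExtLM.extFun_graph graphzero₁ (total₁ x hx))
        (ExtLM.extFun_graph graphzero₁ (total₁ y hy)))
  · intro x y hx hy
    exact ExtLM.extFun_eq graphzero₂
      (add_mem (ExtLM.extFun_graph graphzero₂ (total₂ x hx))
        (ExtLM.extFun_graph graphzero₂ (total₂ y hy)))
  · intro x b hx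
    exact ExtLM.extFun_eq graphzero₁
      (ExtLM.gra_mulr _ (ExtLM.extFun_graph graphzero₁ (total₁ x hx)) b)
  · intro x b hx
    exact ExtLM.extFun_eq graphzero₂
      (ExtLM.gra_mulr _ (ExtLM.extFun_graph graphzero₂ (total₂ x hx)) b)
  · intro x y hx
    exact ExtLM.extFun_eq graphzero₁ (AddSubgroup.subset_closure ⟨x, hx, y, rfl⟩)
  · intro x y hx
    exact ExtLM.extFun_eq graphzero₂ (AddSubgroup.subset_closure ⟨x, hx, y, rfl⟩)
  · intro x hx
    exact ExtLM.extFun_eq graphzero₁ (ofmem₁ x hx)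
  · intro x hx
    exact ExtLM.extFun_eq graphzero₂ (ofmem₂ x hx)
  · intro x hx
    exact ExtLM.extFun_eq graphzero₂
      (rt₁ _ (ExtLM.extFun_graph graphzero₁ (total₁ x hx)))
  · intro x hx
    exact ExtLM.extFun_eq graphzero₁
      (rt₂ _ (ExtLM.extFun_graph graphzero₂ (total₂ x hx)))
end
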